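/- Let λ > 0 and let (A_l)_{l ∈ ℤ} be a family of mutually independent {0,1}-valued random variables on a probability space with Pr{A_l = 1} = a_l, where a_l ∈ (0,1) for every l. If the series Σ_{l ∈ ℤ} 2^l · A_l converges almost surely and the law of its sum is the exponential distribution with rate λ, then a_l = 1/(1 + e^{λ·2^l}) for every l ∈ ℤ. -/

import Mathlib

open MeasureTheory ProbabilityTheory Real Set Filter


lemma digit_unique (b : ℤ → ℝ) (hb : ∀ l, b l = 0 ∨ b l = 1)
    (hs : Summable fun l : ℤ => (2:ℝ)^l * b l)
    (hx : ∀ k m : ℤ, (∑' l : ℤ, (2:ℝ)^l * b l) ≠ (k:ℝ) * 2^m) (m : ℤ) :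
    (b m = 1 ↔ Odd ⌊(∑' l : ℤ, (2:ℝ)^l * b l) / 2^m⌋) := by
  set f : ℤ → ℝ := fun l => (2:ℝ)^l * b l with hf
  have hb0 : ∀ l, 0 ≤ b l ∧ b l ≤ 1 := by
    intro l; rcases hb l with h | h <;> simp [h]
  have hf0 : ∀ l, 0 ≤ f l := fun l =>
    mul_nonneg (zpow_nonneg (by norm_num) _) (hb0 l).1
  have hfle : ∀ l, f l ≤ (2:ℝ)^l := fun l => by
    have h := (hb0 l).2
    calc f l = (2:ℝ)^l * b l := rfl
    _ ≤ (2:ℝ)^l * 1 := mul_le_mul_of_nonneg_left h (zpow_nonneg (by norm_num) _)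
    _ = (2:ℝ)^l := mul_one _
  -- choose L above which b vanishes
  have hcof : {l : ℤ | ¬ f l < 1}.Finite :=
    Filter.eventually_cofinite.mp (hs.tendsto_cofinite_zero.eventually (gt_mem_nhds one_pos))
  obtain ⟨c, hc⟩ := hcof.bddAbove
  set L : ℤ := max (max (c + 1) 1) (m + 1) with hL
  have hmL : m < L := lt_of_lt_of_le (lt_add_one m) (le_max_right _ _)
  have hL0 : 0 < L := lt_of_lt_of_le one_pos (le_trans (le_max_right _ _) (le_max_left _ _))
  have hbL : ∀ l, L ≤ l → b l = 0 := by
    intro l hl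
    by_contra h
    have hb1 : b l = 1 := (hb l).resolve_left h
    have h1 : (1:ℝ) ≤ f l := by
      have h2 : (1:ℝ) ≤ (2:ℝ)^l := one_le_zpow₀ (by norm_num) (le_of_lt (lt_of_lt_of_le hL0 hl))
      show (1:ℝ) ≤ (2:ℝ)^l * b l
      rw [hb1, mul_one]; exact h2
    have hmem : l ∈ {l : ℤ | ¬ f l < 1} := not_lt.mpr h1
    have h3 := hc hmem
    have h4 : c + 1 ≤ l := le_trans (le_trans (le_max_left _ _) (le_max_left _ _)) hl
    omega
  -- split the sum
  set g : ℤ → ℝ := (Set.Ici m).indicator f with hg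
  set h : ℤ → ℝ := (Set.Iio m).indicator f with hh
  have hfgh : ∀ l, f l = g l + h l := by
    intro l
    by_cases hml : m ≤ l
    · simp [hg, hh, Set.indicator_apply, hml, not_lt.mpr hml]
    · simp [hg, hh, Set.indicator_apply, hml, lt_of_not_ge hml]
  have hsg : Summable g := hs.indicator _
  have hsh : Summable h := hs.indicator _
  have hsplit : (∑' l, f l) = (∑' l, g l) + (∑' l, h l) := by
    calc (∑' l, f l) = (∑' l, (g l + h l)) := by exact tsum_congr hfgh
    _ = (∑' l, g l) + (∑' l, h l) := Summable.tsum_add hsg hsh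
  -- the upper part is a finite sum
  have hgsum : (∑' l, g l) = ∑ l ∈ Finset.Ico m L, f l := by
    rw [tsum_eq_sum (s := Finset.Ico m L)]
    · exact Finset.sum_congr rfl fun l hl => by
        rw [Finset.mem_Ico] at hl
        simp [hg, Set.indicator_apply, hl.1]
    · intro l hl
      rw [Finset.mem_Ico, not_and_or, not_le, not_lt] at hl
      rcases hl with hl | hl
      · simp [hg, Set.indicator_apply, not_le.mpr hl]
      · simp [hg, Set.indicator_apply, hf, hbL l hl]
  -- bound the lower part
  have hT0 : 0 ≤ ∑' l, h l :=
    tsum_nonneg fun l => Set.indicator_apply_nonneg (fun _ => hf0 l)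
  have hTle : (∑' l, h l) ≤ (2:ℝ)^m := by
    set j : ℤ → ℝ := (Set.Iio m).indicator (fun l => (2:ℝ)^l) with hj
    have hinj : Function.Injective (fun n : ℕ => m - 1 - (n:ℤ)) := by
      intro x y hxy; simpa using hxy
    have hrange : Function.support j ⊆ Set.range (fun n : ℕ => m - 1 - (n:ℤ)) := by
      intro l hl
      have hlm : l < m := by
        by_contra hc'
        exact hl (by simp [hj, Set.indicator_apply, not_lt.mp hc', not_lt.mpr (not_lt.mp hc')])
      refine ⟨(m - 1 - l).toNat, ?_⟩
      show m - 1 - ((m - 1 - l).toNat : ℤ) = l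
      omega
    have hcomp : ∀ n : ℕ, j (m - 1 - (n:ℤ)) = (2:ℝ)^(m-1) * (1/2)^n := by
      intro n
      have hlt : (m - 1 - (n:ℤ)) ∈ Set.Iio m := by simp; omega
      rw [hj, Set.indicator_of_mem hlt]
      rw [show m - 1 - (n:ℤ) = (m - 1) + (-(n:ℤ)) by ring, zpow_add₀ (by norm_num : (2:ℝ) ≠ 0)]
      congr 1
      rw [zpow_neg, ← zpow_natCast]
      simp [one_div, inv_pow]
    have hsumgeo : Summable (fun n : ℕ => (2:ℝ)^(m-1) * (1/2)^n) :=
      (summable_geometric_of_lt_one (by norm_num) (by norm_num)).mul_left _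
    have hz : ∀ x ∉ Set.range (fun n : ℕ => m - 1 - (n:ℤ)), j x = 0 := by
      intro x hxr
      by_contra hzz
      exact hxr (hrange (Function.mem_support.mpr hzz))
    have hsj : Summable j := by
      rw [← hinj.summable_iff hz]
      exact hsumgeo.congr fun n => (hcomp n).symm
    have htj : (∑' l, j l) = (2:ℝ)^m := by
      rw [← hinj.tsum_eq hrange]
      calc (∑' n : ℕ, j (m - 1 - (n:ℤ))) = ∑' n : ℕ, (2:ℝ)^(m-1) * (1/2)^n := tsum_congr hcomp
      _ = (2:ℝ)^(m-1) * (1 - 1/2)⁻¹ := by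
          rw [tsum_mul_left, tsum_geometric_of_lt_one (by norm_num) (by norm_num)]
      _ = (2:ℝ)^(m-1) * 2 := by norm_num
      _ = (2:ℝ)^m := by
          rw [zpow_sub₀ (by norm_num : (2:ℝ) ≠ 0)]; ring
    refine le_trans (Summable.tsum_le_tsum ?_ hsh hsj) (le_of_eq htj)
    intro l
    by_cases hlm : l ∈ Set.Iio m
    · rw [hh, hj, Set.indicator_of_mem hlm, Set.indicator_of_mem hlm]; exact hfle l
    · rw [hh, hj, Set.indicator_of_notMem hlm, Set.indicator_of_notMem hlm]
  -- integer value of the upper finite sum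
  set k : ℤ := ∑ l ∈ Finset.Ico m L, (if b l = 1 then 2^((l - m).toNat) else 0) with hk
  have h2m : (0:ℝ) < 2^m := zpow_pos (by norm_num) m
  have hFk : (∑ l ∈ Finset.Ico m L, f l) = (k:ℝ) * 2^m := by
    have hcast : ((k:ℝ)) = ∑ l ∈ Finset.Ico m L,
        (if b l = 1 then (2:ℝ)^((l - m).toNat) else 0) := by
      rw [hk]; push_cast [apply_ite (Int.cast : ℤ → ℝ)]; rfl
    rw [hcast, Finset.sum_mul]
    refine Finset.sum_congr rfl fun l hl => ?_
    rw [Finset.mem_Ico] at hl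
    rcases hb l with h0 | h1
    · rw [if_neg (by rw [h0]; norm_num)]
      show (2:ℝ)^l * b l = 0 * 2^m
      rw [h0]; ring
    · rw [if_pos h1]
      have hpow : (2:ℝ)^((l - m).toNat) * 2^m = 2^l := by
        rw [← zpow_natCast (2:ℝ) ((l - m).toNat),
          Int.toNat_of_nonneg (by omega : (0:ℤ) ≤ l - m),
          ← zpow_add₀ (by norm_num : (2:ℝ) ≠ 0)]
        congr 1; ring
      show (2:ℝ)^l * b l = (2:ℝ)^((l - m).toNat) * 2^m
      rw [h1, mul_one, hpow]
  set T : ℝ := ∑' l, h l with hT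
  have hxval : tsum f = (k:ℝ) * 2^m + T := by rw [hsplit, hgsum, hFk]
  have hTlt : T < (2:ℝ)^m := by
    rcases lt_or_eq_of_le hTle with h' | h'
    · exact h'
    · exfalso
      apply hx (k + 1) m
      rw [hxval, h']
      push_cast; ring
  have hfloor : ⌊tsum f / 2^m⌋ = k := by
    rw [Int.floor_eq_iff]
    constructor
    · rw [le_div_iff₀ h2m, hxval]; linarith
    · rw [div_lt_iff₀ h2m, hxval]; push_cast; linarith
  rw [hfloor]
  -- parity of k
  have hIco : Finset.Ico m L = insert m (Finset.Ico (m+1) L) := by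
    ext y; simp only [Finset.mem_Ico, Finset.mem_insert]; omega
  have hmnot : m ∉ Finset.Ico (m+1) L := by simp
  have hkval : k = (if b m = 1 then 1 else 0)
      + ∑ l ∈ Finset.Ico (m+1) L, (if b l = 1 then (2:ℤ)^((l - m).toNat) else 0) := by
    rw [hk, hIco, Finset.sum_insert hmnot]
    congr 1
    simp
  have heven : Even (∑ l ∈ Finset.Ico (m+1) L, (if b l = 1 then (2:ℤ)^((l - m).toNat) else 0)) := by
    have hdvd : (2:ℤ) ∣ ∑ l ∈ Finset.Ico (m+1) L, (if b l = 1 then (2:ℤ)^((l - m).toNat) else 0) := by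
      refine Finset.dvd_sum fun l hl => ?_
      rw [Finset.mem_Ico] at hl
      split_ifs
      · exact dvd_pow_self 2 (by omega)
      · exact dvd_zero 2
    obtain ⟨t, ht⟩ := hdvd
    exact ⟨t, by omega⟩
  rw [hkval, Int.odd_add]
  rcases hb m with h0 | h1
  · rw [if_neg (by rw [h0]; norm_num)]
    simp [h0, heven]
  · rw [if_pos h1]
    simp [h1, heven]


lemma expMeasure_apply (lam : ℝ) {s : Set ℝ} (hs : MeasurableSet s) :
    expMeasure lam s = ∫⁻ x in s, exponentialPDF lam x := by
  rw [expMeasure, gammaMeasure, withDensity_apply _ hs]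
  rfl

lemma expMeasure_null (lam : ℝ) {s : Set ℝ} (hs : volume s = 0) :
    expMeasure lam s = 0 := by
  rw [expMeasure, gammaMeasure]
  exact (withDensity_absolutelyContinuous volume _) hs

instance expMeasure_noAtoms (lam : ℝ) : NullSingletonClass (expMeasure lam) :=
  ⟨fun x => expMeasure_null lam (measure_singleton x)⟩

lemma expMeasure_Iic (lam : ℝ) (hlam : 0 < lam) {t : ℝ} (ht : 0 ≤ t) :
    expMeasure lam (Iic t) = ENNReal.ofReal (1 - exp (-(lam * t))) := by
  rw [expMeasure_apply lam measurableSet_Iic, lintegral_exponentialPDF_eq_antiDeriv hlam,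
    if_pos ht]

lemma expMeasure_Ioc (lam : ℝ) (hlam : 0 < lam) {p q : ℝ} (hp : 0 ≤ p) (hpq : p ≤ q) :
    expMeasure lam (Ioc p q) = ENNReal.ofReal (exp (-(lam * p)) - exp (-(lam * q))) := by
  haveI := isProbabilityMeasure_expMeasure hlam
  rw [← Set.Iic_sdiff_Iic, measure_diff (Set.Iic_subset_Iic.mpr hpq)
    measurableSet_Iic.nullMeasurableSet (measure_ne_top _ _),
    expMeasure_Iic lam hlam (le_trans hp hpq), expMeasure_Iic lam hlam hp,
    ← ENNReal.ofReal_sub _ (by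
      have : exp (-(lam * p)) ≤ 1 := exp_le_one_iff.mpr (by nlinarith)
      linarith)]
  congr 1; ring

lemma expMeasure_odd_floor (lam : ℝ) (hlam : 0 < lam) (m : ℤ) :
    expMeasure lam {x : ℝ | Odd ⌊x / (2:ℝ)^m⌋}
      = ENNReal.ofReal (1 / (1 + Real.exp (lam * 2^m))) := by
  haveI := isProbabilityMeasure_expMeasure hlam
  set c : ℝ := (2:ℝ)^m with hc
  have hc0 : (0:ℝ) < c := zpow_pos (by norm_num) m
  set E : Set ℝ := {x : ℝ | Odd ⌊x / c⌋} with hE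
  have hEmeas : MeasurableSet E := by
    have hfl : Measurable fun x : ℝ => ⌊x / c⌋ := (measurable_id.div_const c).floor
    exact hfl (show MeasurableSet {n : ℤ | Odd n} from trivial)
  set I : ℕ → Set ℝ := fun n => Ico ((2*n+1)*c) ((2*n+2)*c) with hI
  have hfloorI : ∀ (n : ℕ) (x : ℝ), x ∈ I n → ⌊x / c⌋ = 2*n+1 := by
    intro n x hx
    obtain ⟨h1, h2⟩ := hx
    rw [Int.floor_eq_iff]
    constructor
    · rw [le_div_iff₀ hc0]; push_cast; linarith
    · rw [div_lt_iff₀ hc0]; push_cast; linarith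
  have hdecomp : E ∩ Ici 0 = ⋃ n, I n := by
    ext x
    constructor
    · rintro ⟨hodd, hx0⟩
      have hd0 : 0 ≤ ⌊x / c⌋ := Int.floor_nonneg.mpr (div_nonneg hx0 hc0.le)
      obtain ⟨j, hj⟩ := hodd
      have hj0 : 0 ≤ j := by omega
      refine Set.mem_iUnion.mpr ⟨j.toNat, ?_⟩
      have hfl : ⌊x / c⌋ = 2 * (j.toNat : ℤ) + 1 := by omega
      have h1 := Int.floor_le (x / c)
      have h2 := Int.lt_floor_add_one (x / c)
      rw [hfl] at h1 h2
      constructor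
      · have := (le_div_iff₀ hc0).mp (by exact_mod_cast h1)
        push_cast at this ⊢
        linarith
      · have := (div_lt_iff₀ hc0).mp (by push_cast at h2 ⊢; exact_mod_cast h2)
        push_cast at this ⊢
        linarith
    · intro hx
      obtain ⟨n, hn⟩ := Set.mem_iUnion.mp hx
      have hfl := hfloorI n _ hn
      constructor
      · rw [hE]; simp only [Set.mem_setOf_eq, hfl]; exact ⟨n, by push_cast; ring⟩
      · have := hn.1
        have : (0:ℝ) ≤ (2*n+1)*c := by positivity
        exact le_trans this hn.1
  have hneg : expMeasure lam (Iio 0) = 0 := by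
    rw [expMeasure_apply lam measurableSet_Iio]
    exact lintegral_exponentialPDF_of_nonpos le_rfl
  have hEae : (E : Set ℝ) =ᵐ[expMeasure lam] ((E ∩ Ici 0 : Set ℝ)) := by
    rw [Filter.eventuallyEq_set]
    filter_upwards [measure_eq_zero_iff_ae_notMem.mp hneg] with x hx
    show x ∈ E ↔ x ∈ (E ∩ Ici 0 : Set ℝ)
    simp only [Set.mem_inter_iff, Set.mem_Ici]
    exact ⟨fun h => ⟨h, not_lt.mp hx⟩, fun h => h.1⟩
  have hdisj : Pairwise (Function.onFun Disjoint I) := by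
    intro i j hij
    rw [Function.onFun, Set.disjoint_left]
    intro x hxi hxj
    have := hfloorI i x hxi
    have := hfloorI j x hxj
    omega
  have hsum : expMeasure lam E = ∑' n : ℕ, expMeasure lam (I n) := by
    rw [measure_congr hEae, hdecomp, measure_iUnion hdisj fun n => measurableSet_Ico]
  -- compute each term
  set u : ℝ := exp (-(lam * c)) with hu
  have hu0 : 0 < u := exp_pos _
  have hu1 : u < 1 := exp_lt_one_iff.mpr (by nlinarith)
  have hterm : ∀ n : ℕ, expMeasure lam (I n) = ENNReal.ofReal ((u - u^2) * (u^2)^n) := by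
    intro n
    have h1 : (0:ℝ) ≤ (2*n+1)*c := by positivity
    have h2 : (2*(n:ℝ)+1)*c ≤ (2*n+2)*c := by nlinarith
    rw [hI]
    rw [measure_congr (Ico_ae_eq_Ioc (μ := expMeasure lam)), expMeasure_Ioc lam hlam h1 h2]
    congr 1
    have e1 : exp (-(lam * ((2*(n:ℝ)+1)*c))) = u^(2*n+1) := by
      rw [hu, ← Real.exp_nat_mul]
      congr 1
      push_cast; ring
    have e2 : exp (-(lam * ((2*(n:ℝ)+2)*c))) = u^(2*n+2) := by
      rw [hu, ← Real.exp_nat_mul]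
      congr 1
      push_cast; ring
    rw [e1, e2, pow_add, pow_add, pow_mul]
    ring
  rw [hsum]
  have hu2 : u^2 < 1 := by nlinarith
  have hsummable : Summable (fun n : ℕ => (u - u^2) * (u^2)^n) :=
    (summable_geometric_of_lt_one (by positivity) hu2).mul_left _
  calc (∑' n : ℕ, expMeasure lam (I n))
      = ∑' n : ℕ, ENNReal.ofReal ((u - u^2) * (u^2)^n) := tsum_congr hterm
    _ = ENNReal.ofReal (∑' n : ℕ, (u - u^2) * (u^2)^n) := by
        have hnn : (0:ℝ) ≤ u - u^2 := by nlinarith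
        rw [ENNReal.ofReal_tsum_of_nonneg
          (fun n => mul_nonneg hnn (pow_nonneg (sq_nonneg u) n)) hsummable]
    _ = ENNReal.ofReal ((u - u^2) * (1 - u^2)⁻¹) := by
        rw [tsum_mul_left, tsum_geometric_of_lt_one (by positivity) hu2]
    _ = ENNReal.ofReal (1 / (1 + Real.exp (lam * c))) := by
        congr 1
        have hexp : Real.exp (lam * c) = u⁻¹ := by
          rw [hu, Real.exp_neg, inv_inv]
        rw [hexp]
        have h1u : 1 - u^2 ≠ 0 := by nlinarith
        have h2u : 1 + u⁻¹ ≠ 0 := by positivity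
        field_simp
        ring


/-- **Lemma 3 of the paper, "only if" direction.** If `(A l)_{l : ℤ}` are mutually independent
`{0,1}`-valued random variables with `Pr{A l = 1} = a l ∈ (0,1)`, and the series
`∑_{l : ℤ} 2^l * A l` converges almost surely with the law of its sum being the exponential
distribution with rate `λ`, then necessarily `a l = 1 / (1 + exp (λ 2^l))` for every `l`. -/
theorem binary_expansion_of_exponential_only_if
    {Ω : Type*} [MeasurableSpace Ω] (P : Measure Ω) [IsProbabilityMeasure P]
    (lam : ℝ) (hlam : 0 < lam) (A : ℤ → Ω → ℝ) (a : ℤ → ℝ)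
    (hmeas : ∀ l : ℤ, Measurable (A l))
    (h01 : ∀ (l : ℤ) (ω : Ω), A l ω = 0 ∨ A l ω = 1)
    (ha : ∀ l : ℤ, a l ∈ Set.Ioo (0 : ℝ) 1)
    (hindep : iIndepFun A P)
    (hprob : ∀ l : ℤ, P {ω | A l ω = 1} = ENNReal.ofReal (a l))
    (hsum : ∀ᵐ ω ∂P, Summable fun l : ℤ => (2 : ℝ) ^ l * A l ω)
    (hlaw : P.map (fun ω => ∑' l : ℤ, (2 : ℝ) ^ l * A l ω) = expMeasure lam) :
    ∀ l : ℤ, a l = 1 / (1 + Real.exp (lam * 2 ^ l)) := by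
  intro m
  haveI := isProbabilityMeasure_expMeasure hlam
  set X : Ω → ℝ := fun ω => ∑' l : ℤ, (2:ℝ)^l * A l ω with hX
  have hXmeas : AEMeasurable X P := by
    by_contra h
    rw [Measure.map_of_not_aemeasurable h] at hlaw
    have h1 : (0 : Measure ℝ) Set.univ = 1 := by rw [hlaw]; exact measure_univ
    simp at h1
  set D : Set ℝ := {x : ℝ | ∃ k m' : ℤ, x = (k:ℝ) * 2^m'} with hD
  have hDcount : D.Countable := by
    have hDeq : D = ⋃ (k : ℤ), ⋃ (m' : ℤ), {((k:ℝ) * 2^m')} := by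
      ext x
      simp only [hD, Set.mem_setOf_eq, Set.mem_iUnion, Set.mem_singleton_iff]
    rw [hDeq]
    exact Set.countable_iUnion fun k => Set.countable_iUnion fun m' => Set.countable_singleton _
  have hDmeas : MeasurableSet D := hDcount.measurableSet
  have hDnull : expMeasure lam D = 0 :=
    expMeasure_null lam (Set.Countable.measure_zero hDcount _)
  have hXD : ∀ᵐ ω ∂P, X ω ∉ D := by
    have hpre : P (X ⁻¹' D) = 0 := by
      rw [← Measure.map_apply_of_aemeasurable hXmeas hDmeas, hlaw]
      exact hDnull
    exact measure_eq_zero_iff_ae_notMem.mp hpre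
  have hdig : ∀ᵐ ω ∂P, (A m ω = 1 ↔ Odd ⌊X ω / (2:ℝ)^m⌋) := by
    filter_upwards [hsum, hXD] with ω hsω hdω
    exact digit_unique (fun l => A l ω) (fun l => h01 l ω) hsω
      (fun k m' hk => hdω ⟨k, m', hk⟩) m
  set Em : Set ℝ := {x : ℝ | Odd ⌊x / (2:ℝ)^m⌋} with hEm
  have hEmMeas : MeasurableSet Em :=
    (measurable_id.div_const _).floor (show MeasurableSet {n : ℤ | Odd n} from trivial)
  have hsets : ({ω | A m ω = 1} : Set Ω) =ᵐ[P] (X ⁻¹' Em : Set Ω) := by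
    rw [Filter.eventuallyEq_set]
    filter_upwards [hdig] with ω hω
    exact hω
  have hkey : ENNReal.ofReal (a m) = expMeasure lam Em := by
    rw [← hprob m, measure_congr hsets,
      ← Measure.map_apply_of_aemeasurable hXmeas hEmMeas, hlaw]
  rw [expMeasure_odd_floor lam hlam m] at hkey
  exact (ENNReal.ofReal_eq_ofReal_iff (ha m).1.le (by positivity)).mp hkey
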